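/- Let ℓ > 0 and K₁, K₂ ∈ ℝ. Define M₁ = [[ℓK₁ − 1, −ℓ], [K₁ + K₂ − ℓK₁K₂, ℓK₂ − 1]] and M₂ = [[ℓK₂ − 1, −ℓ], [K₁ + K₂ − ℓK₁K₂, ℓK₁ − 1]], and let A = M₂M₁. Then det A = 1 and trace A = 2 + 4ℓ(ℓK₁K₂ − K₁ − K₂). Moreover, A has no eigenvalue on the unit circle (in ℂ) if and only if (1 − ℓK₁)(1 − ℓK₂) ∉ [0,1]. -/

import Mathlib

open Matrix Polynomial

lemma aux13 (t : ℝ) :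
    (∀ z : ℂ, ‖z‖ = 1 → z ^ 2 - (t : ℂ) * z + 1 ≠ 0) ↔ 2 < |t| := by
  constructor
  · intro h
    by_contra hle
    push_neg at hle
    have h2 : (t / 2) ^ 2 ≤ 1 := by
      nlinarith [abs_nonneg t, sq_abs t, sq_nonneg (|t|-2)]
    set s := Real.sqrt (1 - (t / 2) ^ 2) with hs
    have hs2 : s ^ 2 = 1 - (t / 2) ^ 2 := Real.sq_sqrt (by linarith)
    set z : ℂ := ⟨t / 2, s⟩ with hz
    have hnorm : Complex.normSq z = 1 := by
      simp [Complex.normSq_apply, hz]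
      nlinarith [hs2]
    have habs : ‖z‖ = 1 := by
      simp only [Complex.norm_def, hnorm, Real.sqrt_one]
    have hsum : z + (starRingEnd ℂ) z = (t : ℂ) := by
      apply Complex.ext <;> simp [hz]
    have hprod : z * (starRingEnd ℂ) z = 1 := by
      rw [Complex.mul_conj, hnorm]; norm_num
    exact h z habs (by rw [← hsum, ← hprod]; ring)
  · intro ht z habs heq
    have hz0 : z ≠ 0 := by
      intro h0; rw [h0] at habs; simp at habs
    have hnorm : Complex.normSq z = 1 := by
      have := Complex.sq_norm z
      rw [habs] at this; linarith [this.symm] 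
    have hprod : z * (starRingEnd ℂ) z = 1 := by
      rw [Complex.mul_conj, hnorm]; norm_num
    have hsum : (t : ℂ) = z + (starRingEnd ℂ) z := by
      have h3 : (t : ℂ) * z = (z + (starRingEnd ℂ) z) * z := by
        linear_combination -heq - hprod
      exact mul_right_cancel₀ hz0 h3
    have htre : t = 2 * z.re := by
      have := congrArg Complex.re hsum
      simp [Complex.add_re, Complex.conj_re] at this
      linarith
    have : |t| ≤ 2 := by
      rw [htre, abs_mul, abs_two]
      have : |z.re| ≤ ‖z‖ := Complex.abs_re_le_norm z
      rw [habs] at this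
      linarith
    linarith

lemma aux13b (p : ℝ) : 2 < |4 * p - 2| ↔ p ∉ Set.Icc (0:ℝ) 1 := by
  rw [Set.mem_Icc, lt_abs]
  constructor
  · rintro (h | h) hc <;> obtain ⟨h0, h1⟩ := hc <;> linarith
  · intro h
    push_neg at h
    rcases lt_or_ge p 0 with hp | hp
    · right; linarith
    · left; linarith [h hp]

/-- hyperbolicity criterion for a period-2 billiard orbit.  With
`M₁ = dφ(θ₁,0)`, `M₂ = dφ(θ₂,0)` and `A = M₂M₁`, we have `det A = 1`,
`tr A = 2 + 4ℓ(ℓK₁K₂ − K₁ − K₂)`, and `A` has no eigenvalue on the unit circle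
(no root of its characteristic polynomial of modulus one) iff
`(1 − ℓK₁)(1 − ℓK₂) ∉ [0,1]`. -/
theorem stmt13 (ℓ K₁ K₂ : ℝ) (hℓ : 0 < ℓ) :
    let M₁ : Matrix (Fin 2) (Fin 2) ℝ :=
      !![ℓ * K₁ - 1, -ℓ; K₁ + K₂ - ℓ * K₁ * K₂, ℓ * K₂ - 1]
    let M₂ : Matrix (Fin 2) (Fin 2) ℝ :=
      !![ℓ * K₂ - 1, -ℓ; K₁ + K₂ - ℓ * K₁ * K₂, ℓ * K₁ - 1]
    let A := M₂ * M₁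
    A.det = 1 ∧ A.trace = 2 + 4 * ℓ * (ℓ * K₁ * K₂ - K₁ - K₂) ∧
      ((∀ z : ℂ, ‖z‖ = 1 → ¬ ((A.map (algebraMap ℝ ℂ)).charpoly.IsRoot z)) ↔
        (1 - ℓ * K₁) * (1 - ℓ * K₂) ∉ Set.Icc (0:ℝ) 1) := by
  intro M₁ M₂ A
  have hA : A = !![(ℓ*K₂-1)*(ℓ*K₁-1) + (-ℓ)*(K₁+K₂-ℓ*K₁*K₂),
      (ℓ*K₂-1)*(-ℓ) + (-ℓ)*(ℓ*K₂-1);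
      (K₁+K₂-ℓ*K₁*K₂)*(ℓ*K₁-1) + (ℓ*K₁-1)*(K₁+K₂-ℓ*K₁*K₂),
      (K₁+K₂-ℓ*K₁*K₂)*(-ℓ) + (ℓ*K₁-1)*(ℓ*K₂-1)] := by
    show M₂ * M₁ = _
    rw [Matrix.mul_fin_two]
  set t : ℝ := 2 + 4 * ℓ * (ℓ * K₁ * K₂ - K₁ - K₂) with ht
  have hdet : A.det = 1 := by rw [hA, Matrix.det_fin_two_of]; ring
  have htr : A.trace = t := by rw [hA, Matrix.trace_fin_two_of]; ring
  refine ⟨hdet, htr, ?_⟩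
  have hB : A.map (algebraMap ℝ ℂ) =
      !![(((ℓ*K₂-1)*(ℓ*K₁-1) + (-ℓ)*(K₁+K₂-ℓ*K₁*K₂) : ℝ) : ℂ),
      (((ℓ*K₂-1)*(-ℓ) + (-ℓ)*(ℓ*K₂-1) : ℝ) : ℂ);
      (((K₁+K₂-ℓ*K₁*K₂)*(ℓ*K₁-1) + (ℓ*K₁-1)*(K₁+K₂-ℓ*K₁*K₂) : ℝ) : ℂ),
      (((K₁+K₂-ℓ*K₁*K₂)*(-ℓ) + (ℓ*K₁-1)*(ℓ*K₂-1) : ℝ) : ℂ)] := by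
    rw [hA]
    ext i j
    fin_cases i <;> fin_cases j <;> simp [Matrix.map_apply, Complex.coe_algebraMap]
  have hroot : ∀ z : ℂ, (A.map (algebraMap ℝ ℂ)).charpoly.IsRoot z ↔
      z ^ 2 - (t : ℂ) * z + 1 = 0 := by
    intro z
    rw [Polynomial.IsRoot, Matrix.charpoly, Matrix.det_fin_two,
      Matrix.charmatrix_apply_eq, Matrix.charmatrix_apply_eq,
      Matrix.charmatrix_apply_ne _ _ _ (by decide),
      Matrix.charmatrix_apply_ne _ _ _ (by decide), hB]
    simp only [Matrix.of_apply, Matrix.cons_val', Matrix.cons_val_zero, Matrix.cons_val_one, Matrix.head_cons,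
      Matrix.head_fin_const, Matrix.empty_val', Matrix.cons_val_fin_one,
      Polynomial.eval_sub, Polynomial.eval_mul, Polynomial.eval_neg, Polynomial.eval_X,
      Polynomial.eval_C]
    constructor <;> intro h <;> · rw [← h]; push_cast [ht]; ring
  constructor
  · intro h
    rw [← aux13b ((1 - ℓ*K₁)*(1 - ℓ*K₂)), show 4 * ((1 - ℓ*K₁)*(1 - ℓ*K₂)) - 2 = t by rw [ht]; ring]
    rw [← aux13 t]
    intro z hz
    exact fun hc => h z hz ((hroot z).mpr hc)
  · intro h z hz
    rw [← aux13b ((1 - ℓ*K₁)*(1 - ℓ*K₂)), show 4 * ((1 - ℓ*K₁)*(1 - ℓ*K₂)) - 2 = t by rw [ht]; ring, ← aux13 t] at h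
    exact fun hr => h z hz ((hroot z).mp hr)
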